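/- arXiv:1512.02161 — 2 statements merged into one kernel-verified Lean document; each statement's English description precedes it below -/
import Mathlib

section
/- Let n ≥ 1 and let d_1 ≤ d_2 ≤ ... ≤ d_k be positive integers with d_1 + ... + d_k = n(n+1)/2. Suppose that every bipartite graph G with parts X and Y whose X-degree sequence (the degrees of the vertices of X in nondecreasing order) equals (d_1,...,d_k) admits a partition of its edge set into subgraphs F_1,...,F_n where F_i has exactly i edges and each F_i is a star forest with centers in X (the decomposition need not be ascending). Then ∑_{i=0}^{t} d_{k-i} ≥ ∑_{i=0}^{t} (n-i) for every t with 0 ≤ t ≤ k-1. -/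
open Finset

/-- The degree in the bipartite edge set `E` of a vertex `x` of the part `X = Fin k`. -/
def Xdeg {k m : ℕ} (E : Finset (Fin k × Fin m)) (x : Fin k) : ℕ :=
  (E.filter fun e => e.1 = x).card

/-- The degree in the bipartite edge set `E` of a vertex `y` of the part `Y = Fin m`. -/
def Ydeg {k m : ℕ} (E : Finset (Fin k × Fin m)) (y : Fin m) : ℕ :=
  (E.filter fun e => e.2 = y).card

/-- A star forest with centers in `X`: every vertex of `Y` has degree at most one. -/
def IsStarForest {k m : ℕ} (F : Finset (Fin k × Fin m)) : Prop :=
  ∀ y : Fin m, Ydeg F y ≤ 1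

/-- The simple graph on the vertex set `Fin k ⊕ Fin m` determined by a set of
bipartite edges. -/
def toGraph {k m : ℕ} (F : Finset (Fin k × Fin m)) : SimpleGraph (Fin k ⊕ Fin m) where
  Adj u v := (∃ x y, u = Sum.inl x ∧ v = Sum.inr y ∧ (x, y) ∈ F) ∨
             (∃ x y, v = Sum.inl x ∧ u = Sum.inr y ∧ (x, y) ∈ F)
  symm := ⟨fun _ _ h => Or.symm h⟩
  loopless := by
    constructor
    rintro u (⟨x, y, rfl, h, -⟩ | ⟨x, y, rfl, h, -⟩) <;> cases h

/-- `F` is isomorphic to a subgraph of `F'`: there is an injective map of vertices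
carrying edges to edges. -/
def IsoToSubgraph {k m k' m' : ℕ} (F : Finset (Fin k × Fin m))
    (F' : Finset (Fin k' × Fin m')) : Prop :=
  ∃ f : Fin k ⊕ Fin m → Fin k' ⊕ Fin m',
    Function.Injective f ∧ ∀ u v, (toGraph F).Adj u v → (toGraph F').Adj (f u) (f v)

/-- `c ⪯ c'` : after reordering the components of each vector in nondecreasing order,
each component of `c` is at most the corresponding component of `c'`. -/
def Prec {k : ℕ} (c c' : Fin k → ℕ) : Prop :=
  ∀ i : Fin k, c (Tuple.sort c i) ≤ c' (Tuple.sort c' i)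

/-- A star-forest ascending subgraph decomposition of the edge set `E`:
the `F i` partition `E`, `F i` has `i + 1` edges (`1`-based: `i` edges),
every `F i` is a star forest with centers in `X`, and each `F i` is isomorphic
to a subgraph of the next one. -/
def StarForestASD {k m n : ℕ} (E : Finset (Fin k × Fin m))
    (F : Fin n → Finset (Fin k × Fin m)) : Prop :=
  (∀ i j, i ≠ j → Disjoint (F i) (F j)) ∧
  Finset.univ.biUnion F = E ∧
  (∀ i, (F i).card = (i : ℕ) + 1) ∧
  (∀ i, IsStarForest (F i)) ∧
  ∀ j : ℕ, (h : j + 1 < n) → IsoToSubgraph (F ⟨j, Nat.lt_of_succ_lt h⟩) (F ⟨j + 1, h⟩)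

/-- The reduced bipartite graph with (1-based) degree sequence `d 1 ≤ ⋯ ≤ d k`:
`x i` is adjacent exactly to `y 1, …, y (d i)`. -/
def reducedEdges (k : ℕ) (d : ℕ → ℕ) : Finset (Fin k × Fin (d k)) :=
  Finset.univ.filter fun e => (e.2 : ℕ) + 1 ≤ d ((e.1 : ℕ) + 1)

/-- The columns of `A` satisfy `A_1 ⪯ A_2 ⪯ ⋯ ⪯ A_n`. -/
def AscendingCols {k n : ℕ} (A : Matrix (Fin k) (Fin n) ℕ) : Prop :=
  ∀ j : ℕ, (h : j + 1 < n) →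
    Prec (fun i => A i ⟨j, Nat.lt_of_succ_lt h⟩) (fun i => A i ⟨j + 1, h⟩)

/-- A sequential coloring of the bipartite multigraph encoded by the matrix `A`:
the parallel edge class joining `x i` and `z j` receives the set `S i j` of colors,
the coloring is proper, and the edges at `x i` receive exactly colors `{1, …, d i}`. -/
def SeqColoring {k n : ℕ} (A : Matrix (Fin k) (Fin n) ℕ) (d : Fin k → ℕ)
    (S : Fin k → Fin n → Finset ℕ) : Prop :=
  (∀ i j, (S i j).card = A i j) ∧
  (∀ j : Fin n, ∀ i i' : Fin k, i ≠ i' → Disjoint (S i j) (S i' j)) ∧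
  (∀ i : Fin k, ∀ j j' : Fin n, j ≠ j' → Disjoint (S i j) (S i j')) ∧
  (∀ i : Fin k, Finset.univ.biUnion (fun j => S i j) = Finset.Icc 1 (d i))

lemma card_fin_lt (m D : ℕ) :
    (univ.filter fun y : Fin m => (y : ℕ) < D).card = min D m := by
  rw [Finset.card_bij' (fun (a : Fin m) _ => (a : ℕ))
    (fun b hb => (⟨b, lt_of_lt_of_le (mem_range.mp hb) (min_le_right D m)⟩ : Fin m))
    (fun a ha => by simpa [lt_min_iff] using (mem_filter.mp ha).2)
    (fun b hb => by simp [lt_min_iff] at hb; simp [hb])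
    (fun a ha => rfl) (fun b hb => rfl), Finset.card_range]

lemma card_fin_ge (m a : ℕ) (h : a ≤ m) :
    (univ.filter fun y : Fin m => a ≤ (y : ℕ)).card = m - a := by
  have h2 := Finset.card_filter_add_card_filter_not
    (s := (univ : Finset (Fin m))) (p := fun y : Fin m => (y : ℕ) < a)
  rw [card_fin_lt] at h2
  have : (univ.filter fun y : Fin m => ¬ (y : ℕ) < a)
      = (univ.filter fun y : Fin m => a ≤ (y : ℕ)) := by
    apply filter_congr; intro y _; simp [not_lt]
  rw [this] at h2
  simp at h2
  omega


/-- **Lemma 2 (necessary condition).** If every bipartite graph whose `X`-degree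
sequence is `d 1 ≤ ⋯ ≤ d k` admits a decomposition into star forests `F 1, …, F n`
with centers in `X`, where `F i` has `i` edges, then
`∑_{i=0}^{t} d (k-i) ≥ ∑_{i=0}^{t} (n-i)` for every `0 ≤ t ≤ k-1`. -/
theorem statement1 (n k : ℕ) (hn : 1 ≤ n) (d : ℕ → ℕ)
    (hpos : ∀ i, 1 ≤ i → i ≤ k → 1 ≤ d i)
    (hmono : ∀ i j, 1 ≤ i → i ≤ j → j ≤ k → d i ≤ d j)
    (hsum : ∑ i ∈ Finset.Icc 1 k, d i = n * (n + 1) / 2)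
    (hdecomp : ∀ (m : ℕ) (E : Finset (Fin k × Fin m)),
      (∃ σ : Equiv.Perm (Fin k), ∀ i : Fin k, Xdeg E (σ i) = d ((i : ℕ) + 1)) →
      ∃ F : Fin n → Finset (Fin k × Fin m),
        (∀ i j, i ≠ j → Disjoint (F i) (F j)) ∧
        Finset.univ.biUnion F = E ∧
        (∀ i, (F i).card = (i : ℕ) + 1) ∧
        (∀ i, IsStarForest (F i))) :
    ∀ t : ℕ, t ≤ k - 1 →
      ∑ i ∈ Finset.range (t + 1), (n - i) ≤ ∑ i ∈ Finset.range (t + 1), d (k - i) := by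
  intro t ht
  -- k = 0 is impossible
  rcases Nat.eq_zero_or_pos k with hk0 | hk1
  · exfalso
    subst hk0
    simp at hsum
    have h2 : 2 ≤ n * (n + 1) := by nlinarith
    omega
  have htk : t + 1 ≤ k := by omega
  set m := d k with hm
  -- the X-degrees of the reduced graph
  have hX : ∀ x : Fin k, Xdeg (reducedEdges k d) x = d ((x : ℕ) + 1) := by
    intro x
    have hprod : ((reducedEdges k d).filter fun e => e.1 = x)
        = {x} ×ˢ (univ.filter fun y : Fin m => (y : ℕ) < d ((x : ℕ) + 1)) := by
      ext ⟨a, b⟩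
      simp only [reducedEdges, mem_filter, mem_univ, true_and, mem_product, mem_singleton]
      constructor
      · rintro ⟨h1, rfl⟩; exact ⟨rfl, by omega⟩
      · rintro ⟨rfl, h1⟩; exact ⟨by omega, rfl⟩
    have hdm : d ((x : ℕ) + 1) ≤ m := hmono _ _ (by omega) (by omega) le_rfl
    rw [Xdeg, hprod, Finset.card_product, card_fin_lt, Finset.card_singleton, one_mul,
      min_eq_left hdm]
  obtain ⟨F, hdisj, hunion, hcard, hstar⟩ :=
    hdecomp m (reducedEdges k d) ⟨Equiv.refl _, fun i => hX i⟩
  set s := min (t + 1) n with hs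
  have hsn : s ≤ n := min_le_right _ _
  set T : Finset (Fin n) := univ.filter fun j : Fin n => n - s ≤ (j : ℕ) with hT
  set H : Finset (Fin k × Fin m) := T.biUnion F with hH
  have cardT : T.card = s := by
    rw [hT, card_fin_ge n (n - s) (by omega)]; omega
  have cardH : H.card = ∑ j ∈ T, ((j : ℕ) + 1) := by
    rw [hH, card_biUnion (fun i _ j _ hij => hdisj i j hij)]
    exact sum_congr rfl fun j _ => hcard j
  -- LHS equals card H
  have hLHS : ∑ i ∈ Finset.range (t + 1), (n - i) = H.card := by
    rw [cardH]
    have e1 : ∑ i ∈ Finset.range (t + 1), (n - i) = ∑ i ∈ Finset.range s, (n - i) := by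
      symm
      apply Finset.sum_subset (Finset.range_subset_range.mpr (by omega))
      intro x hx hnx
      simp only [mem_range] at hx hnx
      omega
    have e2 : ∑ i ∈ Finset.range s, (n - i) = ∑ j ∈ Finset.range s, (n - s + j + 1) := by
      rw [← Finset.sum_range_reflect (fun i => n - i) s]
      apply sum_congr rfl
      intro j hj
      simp only [mem_range] at hj
      omega
    have e3 : ∑ j ∈ T, ((j : ℕ) + 1) = ∑ a ∈ Finset.Ico (n - s) n, (a + 1) := by
      apply Finset.sum_bij (fun (j : Fin n) _ => (j : ℕ))
      · intro a ha
        simp only [hT, mem_filter, mem_univ, true_and] at ha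
        exact mem_Ico.mpr ⟨ha, a.isLt⟩
      · intro a _ b _ hab; exact Fin.val_injective hab
      · intro b hb
        simp only [mem_Ico] at hb
        exact ⟨⟨b, hb.2⟩, by simp only [hT, mem_filter, mem_univ, true_and]; omega, rfl⟩
      · intro a _; rfl
    rw [e1, e2, e3, Finset.sum_Ico_eq_sum_range]
    have : n - (n - s) = s := by omega
    rw [this]
  -- fiberwise count of H over Y
  have hfib : H.card = ∑ y ∈ (univ : Finset (Fin m)), Ydeg H y :=
    Finset.card_eq_sum_card_fiberwise (f := Prod.snd) (fun x _ => mem_univ _)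
  -- bound 1 : Ydeg H y ≤ s
  have hYs : ∀ y : Fin m, Ydeg H y ≤ s := by
    intro y
    rw [Ydeg, hH, Finset.filter_biUnion]
    calc (T.biUnion fun j => (F j).filter fun e => e.2 = y).card
        ≤ ∑ j ∈ T, ((F j).filter fun e => e.2 = y).card := Finset.card_biUnion_le
      _ ≤ ∑ _j ∈ T, 1 := Finset.sum_le_sum fun j _ => hstar j y
      _ = s := by rw [Finset.sum_const, smul_eq_mul, mul_one, cardT]
  -- bound 2 : Ydeg H y ≤ c y
  have hHE : H ⊆ reducedEdges k d := by
    rw [hH, ← hunion]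
    exact Finset.biUnion_subset_biUnion_of_subset_left F (subset_univ T)
  have hYc : ∀ y : Fin m,
      Ydeg H y ≤ (univ.filter fun x : Fin k => (y : ℕ) < d ((x : ℕ) + 1)).card := by
    intro y
    have h1 : Ydeg H y ≤ Ydeg (reducedEdges k d) y :=
      Finset.card_le_card (Finset.filter_subset_filter _ hHE)
    have h2 : Ydeg (reducedEdges k d) y
        = (univ.filter fun x : Fin k => (y : ℕ) < d ((x : ℕ) + 1)).card := by
      apply Finset.card_bij (fun (e : Fin k × Fin m) _ => e.1)
      · intro e he
        simp only [Ydeg, reducedEdges, mem_filter, mem_univ, true_and] at he ⊢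
        omega
      · intro e he e' he' hee
        simp only [reducedEdges, mem_filter] at he he'
        exact Prod.ext hee (he.2.trans he'.2.symm)
      · intro x hx
        simp only [mem_filter, mem_univ, true_and] at hx
        exact ⟨(x, y), by simp only [reducedEdges, mem_filter, mem_univ, true_and]; exact ⟨by omega, by trivial⟩, rfl⟩
    omega
  -- key bound : min s (c y) ≤ number of top degrees exceeding y
  have hkey : ∀ y : Fin m,
      Ydeg H y ≤ ((Finset.range (t + 1)).filter fun i => (y : ℕ) < d (k - i)).card := by
    intro y
    set c := (univ.filter fun x : Fin k => (y : ℕ) < d ((x : ℕ) + 1)).card with hc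
    have hsub : Finset.range (min (t + 1) c)
        ⊆ (Finset.range (t + 1)).filter fun i => (y : ℕ) < d (k - i) := by
      intro i hi
      simp only [mem_range, lt_min_iff] at hi
      refine mem_filter.mpr ⟨mem_range.mpr hi.1, ?_⟩
      by_contra hcon
      push_neg at hcon
      have hAB : (univ.filter fun x : Fin k => (y : ℕ) < d ((x : ℕ) + 1))
          ⊆ univ.filter fun x : Fin k => k - i ≤ (x : ℕ) := by
        intro x hx
        simp only [mem_filter, mem_univ, true_and] at hx ⊢
        by_contra hxc
        push_neg at hxc
        have : d ((x : ℕ) + 1) ≤ d (k - i) :=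
          hmono _ _ (by omega) (by omega) (by omega)
        omega
      have hcb := Finset.card_le_card hAB
      rw [card_fin_ge k (k - i) (by omega)] at hcb
      have : k - (k - i) = i := by omega
      omega
    have := Finset.card_le_card hsub
    rw [Finset.card_range] at this
    have hy1 := hYs y
    have hy2 := hYc y
    omega
  -- conclusion
  calc ∑ i ∈ Finset.range (t + 1), (n - i) = H.card := hLHS
    _ = ∑ y ∈ (univ : Finset (Fin m)), Ydeg H y := hfib
    _ ≤ ∑ y ∈ (univ : Finset (Fin m)),
          ((Finset.range (t + 1)).filter fun i => (y : ℕ) < d (k - i)).card :=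
        Finset.sum_le_sum fun y _ => hkey y
    _ = ∑ i ∈ Finset.range (t + 1),
          (univ.filter fun y : Fin m => (y : ℕ) < d (k - i)).card := by
        simp only [Finset.card_filter]
        rw [Finset.sum_comm]
    _ = ∑ i ∈ Finset.range (t + 1), d (k - i) := by
        apply sum_congr rfl
        intro i hi
        simp only [mem_range] at hi
        rw [card_fin_lt, min_eq_left (hmono _ _ (by omega) (by omega) le_rfl)]
end

section
/- Let n ≥ 1, let d_1 ≤ ... ≤ d_k be positive integers with d_1 + ... + d_k = n(n+1)/2, and let G be the reduced bipartite graph with degree sequence (d_1,...,d_k). Suppose there exists an ascending matrix A ∈ N((d_1,...,d_k), (1,2,...,n)) together with finite sets S_{ij} ⊆ {1,2,3,...} with |S_{ij}| = a_{ij} for all 1 ≤ i ≤ k and 1 ≤ j ≤ n, such that for each fixed j the sets S_{1j},...,S_{kj} are pairwise disjoint, and for each fixed i the sets S_{i1},...,S_{in} are pairwise disjoint with union exactly {1,...,d_i}. Then G admits a star-forest ascending subgraph decomposition with the centers of the stars in X. -/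
open Finset

-- unique neighbor in a star forest
lemma starForest_unique {k m : ℕ} {F : Finset (Fin k × Fin m)} (hF : IsStarForest F)
    {x x' : Fin k} {y : Fin m} (h : (x, y) ∈ F) (h' : (x', y) ∈ F) : x = x' := by
  by_contra hne
  have h2 : 1 < (F.filter fun e => e.2 = y).card := by
    rw [Finset.one_lt_card]
    exact ⟨(x, y), by simp [h], (x', y), by simp [h'], by simp [hne]⟩
  exact absurd (hF y) (by simpa [Ydeg] using h2.not_ge)

lemma iso_of_deg_le {k m : ℕ} (F F' : Finset (Fin k × Fin m))
    (hF : IsStarForest F) (hF' : IsStarForest F') (σ : Equiv.Perm (Fin k))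
    (hdeg : ∀ x, Xdeg F x ≤ Xdeg F' (σ x)) : IsoToSubgraph F F' := by
  classical
  set N : Fin k → Finset (Fin m) := fun x => (F.filter fun e => e.1 = x).image Prod.snd with hN
  set N' : Fin k → Finset (Fin m) := fun x => (F'.filter fun e => e.1 = x).image Prod.snd with hN'
  have memN : ∀ x y, y ∈ N x ↔ (x, y) ∈ F := by
    intro x y
    simp only [hN, Finset.mem_image, Finset.mem_filter]
    constructor
    · rintro ⟨⟨a, b⟩, ⟨hab, rfl⟩, rfl⟩; exact hab
    · intro h; exact ⟨(x, y), ⟨h, rfl⟩, rfl⟩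
  have memN' : ∀ x y, y ∈ N' x ↔ (x, y) ∈ F' := by
    intro x y
    simp only [hN', Finset.mem_image, Finset.mem_filter]
    constructor
    · rintro ⟨⟨a, b⟩, ⟨hab, rfl⟩, rfl⟩; exact hab
    · intro h; exact ⟨(x, y), ⟨h, rfl⟩, rfl⟩
  have cardN : ∀ x, (N x).card = Xdeg F x := by
    intro x
    rw [hN, Xdeg, Finset.card_image_of_injOn]
    intro e he e' he' hee
    simp only [Finset.coe_filter, Set.mem_setOf_eq] at he he'
    exact Prod.ext (he.2.trans he'.2.symm) hee
  have cardN' : ∀ x, (N' x).card = Xdeg F' x := by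
    intro x
    rw [hN', Xdeg, Finset.card_image_of_injOn]
    intro e he e' he' hee
    simp only [Finset.coe_filter, Set.mem_setOf_eq] at he he'
    exact Prod.ext (he.2.trans he'.2.symm) hee
  -- per-vertex injections
  have hex : ∀ x : Fin k, ∃ f : Fin m → Fin m,
      Set.InjOn f (N x) ∧ ∀ y ∈ N x, f y ∈ N' (σ x) := by
    intro x
    have hle : (N x).card ≤ (N' (σ x)).card := by
      rw [cardN, cardN']; exact hdeg x
    obtain ⟨t, hts, htc⟩ := Finset.exists_subset_card_eq hle
    have e : (N x : Type) ≃ t := Finset.equivOfCardEq htc.symm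
    refine ⟨fun y => if h : y ∈ N x then (e ⟨y, h⟩ : Fin m) else y, ?_, ?_⟩
    · intro y1 h1 y2 h2 h12
      simp only [Finset.mem_coe] at h1 h2
      simp only [dif_pos h1, dif_pos h2] at h12
      have := e.injective (Subtype.ext h12)
      exact congrArg Subtype.val this
    · intro y hy
      simp only [dif_pos hy]
      exact hts (e ⟨y, hy⟩).2
  choose f hfinj hfmem using hex
  -- disjointness of N' sets
  have hdisjN' : ∀ x x' : Fin k, x ≠ x' → ∀ y, y ∈ N' x → y ∈ N' x' → False := by
    intro x x' hne y hy hy'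
    exact hne (starForest_unique hF' ((memN' x y).1 hy) ((memN' x' y).1 hy'))
  -- global map on Y
  set p : Fin m → Prop := fun y => ∃ x, (x, y) ∈ F with hp
  have hGdef : ∀ y (h : p y), (Classical.choose h, y) ∈ F := fun y h => Classical.choose_spec h
  set G : ∀ y : Fin m, p y → Fin m := fun y h => f (Classical.choose h) y with hG
  have hGmem : ∀ x y (hxy : (x, y) ∈ F) (h : p y), G y h ∈ N' (σ x) := by
    intro x y hxy h
    have hx : Classical.choose h = x := starForest_unique hF (hGdef y h) hxy
    show f (Classical.choose h) y ∈ N' (σ x)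
    rw [hx]
    exact hfmem x y ((memN x y).2 hxy)
  have hGinj : ∀ y1 y2 (h1 : p y1) (h2 : p y2), G y1 h1 = G y2 h2 → y1 = y2 := by
    intro y1 y2 h1 h2 heq
    set x1 := Classical.choose h1
    set x2 := Classical.choose h2
    have m1 : G y1 h1 ∈ N' (σ x1) := hGmem x1 y1 (hGdef y1 h1) h1
    have m2 : G y2 h2 ∈ N' (σ x2) := hGmem x2 y2 (hGdef y2 h2) h2
    have hx12 : x1 = x2 := by
      by_contra hne
      exact hdisjN' (σ x1) (σ x2) (fun hc => hne (σ.injective hc)) _ m1 (heq ▸ m2)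
    have heq' : f x1 y1 = f x2 y2 := heq
    apply hfinj x1 ((memN x1 y1).2 (hGdef y1 h1))
      (by rw [hx12]; exact (memN x2 y2).2 (hGdef y2 h2))
    rw [heq', hx12]
  -- build injection on subtype and extend
  let g0 : {y // p y} → Fin m := fun y => G y.1 y.2
  have hg0 : Function.Injective g0 := by
    intro a b hab
    exact Subtype.ext (hGinj a.1 b.1 a.2 b.2 hab)
  let e0 : {y // p y} ≃ Set.range g0 := Equiv.ofInjective g0 hg0
  have : DecidablePred p := Classical.decPred p
  have : DecidablePred (· ∈ Set.range g0) := Classical.decPred _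
  let π : Equiv.Perm (Fin m) := Equiv.extendSubtype (q := (· ∈ Set.range g0)) e0
  have hπ : ∀ y (h : p y), π y = G y h := by
    intro y h
    have := Equiv.extendSubtype_apply_of_mem (q := (· ∈ Set.range g0)) e0 y h
    rw [this]
    rfl
  refine ⟨Sum.map σ π, Function.Injective.sumMap σ.injective π.injective, ?_⟩
  have key : ∀ x y, (x, y) ∈ F → (σ x, π y) ∈ F' := by
    intro x y hxy
    have h : p y := ⟨x, hxy⟩
    rw [hπ y h]
    exact (memN' (σ x) (G y h)).1 (hGmem x y hxy h)
  rintro u v (⟨x, y, rfl, rfl, hxy⟩ | ⟨x, y, rfl, rfl, hxy⟩)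
  · exact Or.inl ⟨σ x, π y, rfl, rfl, key x y hxy⟩
  · exact Or.inr ⟨σ x, π y, rfl, rfl, key x y hxy⟩

/-- **Proposition (if direction).** If there is an ascending matrix
`A ∈ N(d, (1,…,n))` whose associated bipartite multigraph admits a sequential
coloring for `X`, then the reduced bipartite graph with degree sequence
`d 1 ≤ ⋯ ≤ d k` has a star-forest ASD with centers in `X`. -/
theorem statement4 (n k : ℕ) (hn : 1 ≤ n) (d : ℕ → ℕ)
    (hpos : ∀ i, 1 ≤ i → i ≤ k → 1 ≤ d i)
    (hmono : ∀ i j, 1 ≤ i → i ≤ j → j ≤ k → d i ≤ d j)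
    (hsum : ∑ i ∈ Finset.Icc 1 k, d i = n * (n + 1) / 2)
    (hmat : ∃ A : Matrix (Fin k) (Fin n) ℕ,
      (∀ i : Fin k, ∑ j, A i j = d ((i : ℕ) + 1)) ∧
      (∀ j : Fin n, ∑ i, A i j = (j : ℕ) + 1) ∧
      AscendingCols A ∧
      ∃ S : Fin k → Fin n → Finset ℕ,
        SeqColoring A (fun i => d ((i : ℕ) + 1)) S) :
    ∃ F : Fin n → Finset (Fin k × Fin (d k)),
      StarForestASD (reducedEdges k d) F := by
  classical
  obtain ⟨A, hrow, hcol, hasc, S, hScard, hSdj, hSdi, hSun⟩ := hmat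
  have hsub : ∀ (i : Fin k) (j : Fin n), S i j ⊆ Finset.Icc 1 (d k) := by
    intro i j c hc
    have h1 : c ∈ Finset.Icc 1 (d ((i : ℕ) + 1)) := by
      rw [← hSun i]; exact Finset.mem_biUnion.2 ⟨j, Finset.mem_univ j, hc⟩
    rw [Finset.mem_Icc] at h1 ⊢
    exact ⟨h1.1, h1.2.trans (hmono ((i : ℕ) + 1) k (by omega)
      (Nat.succ_le_of_lt i.isLt) le_rfl)⟩
  set F : Fin n → Finset (Fin k × Fin (d k)) :=
    fun j => Finset.univ.filter fun e => (e.2 : ℕ) + 1 ∈ S e.1 j with hF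
  have memF : ∀ (j : Fin n) (e : Fin k × Fin (d k)),
      e ∈ F j ↔ (e.2 : ℕ) + 1 ∈ S e.1 j := by
    intro j e; simp [hF]
  have hXdeg : ∀ (j : Fin n) (x : Fin k), Xdeg (F j) x = A x j := by
    intro j x
    rw [← hScard x j, Xdeg]
    apply Finset.card_nbij (fun e => (e.2 : ℕ) + 1)
    · intro e he
      simp only [Finset.mem_coe, Finset.mem_filter] at he
      have h1 := (memF j e).1 he.1
      rwa [he.2] at h1
    · intro e he e' he' hee
      simp only [Finset.coe_filter, Set.mem_setOf_eq] at he he'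
      have hee' : (e.2 : ℕ) + 1 = (e'.2 : ℕ) + 1 := hee
      have h2 : e.2 = e'.2 := Fin.ext (by omega)
      exact Prod.ext (he.2.trans he'.2.symm) h2
    · intro c hc
      simp only [Finset.mem_coe] at hc
      have h1 := hsub x j hc
      rw [Finset.mem_Icc] at h1
      refine ⟨(x, ⟨c - 1, by omega⟩), ?_, ?_⟩
      · simp only [Finset.coe_filter, Set.mem_setOf_eq]
        refine ⟨?_, by trivial⟩
        rw [memF]
        show c - 1 + 1 ∈ S x j
        rwa [Nat.sub_add_cancel h1.1]
      · show c - 1 + 1 = c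
        omega
  have hcards : ∀ j : Fin n, (F j).card = (j : ℕ) + 1 := by
    intro j
    rw [Finset.card_eq_sum_card_fiberwise
      (f := Prod.fst) (t := Finset.univ) (fun e _ => Finset.mem_univ _), ← hcol j]
    exact Finset.sum_congr rfl fun x _ => hXdeg j x
  have hstar : ∀ j, IsStarForest (F j) := by
    intro j y
    rw [Ydeg, Finset.card_le_one]
    intro e he e' he'
    simp only [Finset.mem_filter] at he he'
    have h1 := (memF j e).1 he.1
    have h2 := (memF j e').1 he'.1
    rw [he.2] at h1; rw [he'.2] at h2
    have h3 : e.1 = e'.1 := by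
      by_contra hne
      exact Finset.disjoint_left.1 (hSdj j e.1 e'.1 hne) h1 h2
    exact Prod.ext h3 (he.2.trans he'.2.symm)
  have hdisj : ∀ j j' : Fin n, j ≠ j' → Disjoint (F j) (F j') := by
    intro j j' hjj
    rw [Finset.disjoint_left]
    intro e he he'
    exact Finset.disjoint_left.1 (hSdi e.1 j j' hjj) ((memF j e).1 he) ((memF j' e).1 he')
  have hunion : Finset.univ.biUnion F = reducedEdges k d := by
    ext e
    simp only [Finset.mem_biUnion, Finset.mem_univ, true_and, reducedEdges,
      Finset.mem_filter, memF]
    constructor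
    · rintro ⟨j, hj⟩
      have h1 : (e.2 : ℕ) + 1 ∈ Finset.Icc 1 (d ((e.1 : ℕ) + 1)) := by
        rw [← hSun e.1]; exact Finset.mem_biUnion.2 ⟨j, Finset.mem_univ _, hj⟩
      exact (Finset.mem_Icc.1 h1).2
    · intro hle
      have h1 : (e.2 : ℕ) + 1 ∈ Finset.Icc 1 (d ((e.1 : ℕ) + 1)) :=
        Finset.mem_Icc.2 ⟨by omega, hle⟩
      rw [← hSun e.1] at h1
      obtain ⟨j, -, hj⟩ := Finset.mem_biUnion.1 h1
      exact ⟨j, hj⟩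
  refine ⟨F, hdisj, hunion, hcards, hstar, ?_⟩
  intro j h
  set c : Fin k → ℕ := fun i => A i ⟨j, Nat.lt_of_succ_lt h⟩ with hc
  set c' : Fin k → ℕ := fun i => A i ⟨j + 1, h⟩ with hc'
  have hprec : Prec c c' := hasc j h
  set σ : Equiv.Perm (Fin k) := (Tuple.sort c).symm.trans (Tuple.sort c') with hσ
  apply iso_of_deg_le _ _ (hstar _) (hstar _) σ
  intro x
  rw [hXdeg, hXdeg]
  have h2 := hprec ((Tuple.sort c).symm x)
  simp only [Equiv.apply_symm_apply] at h2
  exact h2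
end
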